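/- Let M be a complete connected Riemannian manifold and f : M → ℝ a 1-Lipschitz function. If γ₁ is a transport line of f and γ₂ is a transport curve of f with γ₁ ∩ γ₂ ≠ ∅, then the image of γ₂ is contained in the image of γ₁. In particular two transport lines of f that intersect must coincide. -/
import Mathlib


/- STATEMENT 2: If γ₁ is a transport line of a 1-Lipschitz f and γ₂ a transport curve
of f intersecting γ₁, then the image of γ₂ is contained in the image of γ₁; in
particular two intersecting transport lines coincide.  The Riemannian structure of
the complete connected manifold M is encoded via its metric together with the
non-branching property `hnb` of minimizing geodesics. -/
theorem transport_curve_subset_transport_line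
    {M : Type*} [MetricSpace M] [CompleteSpace M] [ConnectedSpace M]
    (hnb : ∀ a x b c : M, dist a b = dist a x + dist x b →
      dist a c = dist a x + dist x c → dist x b = dist x c → 0 < dist a x → b = c)
    (f : M → ℝ) (hf : LipschitzWith 1 f)
    (γ₁ : ℝ → M)
    (hgeo₁ : ∀ s t : ℝ, dist (γ₁ s) (γ₁ t) = |s - t|)
    (htrans₁ : ∀ s t : ℝ, f (γ₁ t) - f (γ₁ s) = t - s)
    (I : Set ℝ) (hI : I.OrdConnected) (γ₂ : ℝ → M)
    (hspeed₂ : ∀ s ∈ I, ∀ t ∈ I, dist (γ₂ s) (γ₂ t) ≤ |s - t|)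
    (htrans₂ : ∀ s ∈ I, ∀ t ∈ I, f (γ₂ t) - f (γ₂ s) = t - s)
    (hint : (Set.range γ₁ ∩ γ₂ '' I).Nonempty) :
    γ₂ '' I ⊆ Set.range γ₁ ∧ (I = Set.univ → Set.range γ₂ = Set.range γ₁) := by
  obtain ⟨p, ⟨s₀, hs₀⟩, t₀, ht₀, hpt⟩ := hint
  have hxx : γ₁ s₀ = γ₂ t₀ := by rw [hs₀, hpt]
  have hflip : ∀ x y : M, f x - f y ≤ dist x y := by
    intro x y
    have h := hf.dist_le_mul x y
    rw [Real.dist_eq, NNReal.coe_one, one_mul] at h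
    exact (le_abs_self _).trans h
  have key : ∀ t ∈ I, γ₂ t = γ₁ (s₀ + (t - t₀)) := by
    intro t ht
    have hd2 : dist (γ₂ t₀) (γ₂ t) = |t - t₀| := by
      refine le_antisymm ?_ ?_
      · have := hspeed₂ t₀ ht₀ t ht
        rwa [abs_sub_comm] at this
      · have h3 := hflip (γ₂ t) (γ₂ t₀)
        rw [htrans₂ t₀ ht₀ t ht, dist_comm] at h3
        have h4 := hflip (γ₂ t₀) (γ₂ t)
        rw [htrans₂ t ht t₀ ht₀] at h4
        rcases abs_cases (t - t₀) with ⟨h, _⟩ | ⟨h, _⟩ <;> linarith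
    rcases le_total t₀ t with hle | hle
    · have habs : |t - t₀| = t - t₀ := abs_of_nonneg (by linarith)
      have hax : dist (γ₁ (s₀ - 1)) (γ₁ s₀) = 1 := by
        rw [hgeo₁, show s₀ - 1 - s₀ = (-1 : ℝ) by ring]; norm_num
      have hxb : dist (γ₁ s₀) (γ₁ (s₀ + (t - t₀))) = t - t₀ := by
        rw [hgeo₁, show s₀ - (s₀ + (t - t₀)) = -(t - t₀) by ring, abs_neg,
          abs_of_nonneg (by linarith)]
      have hab : dist (γ₁ (s₀ - 1)) (γ₁ (s₀ + (t - t₀))) = 1 + (t - t₀) := by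
        rw [hgeo₁, show s₀ - 1 - (s₀ + (t - t₀)) = -(1 + (t - t₀)) by ring, abs_neg,
          abs_of_nonneg (by linarith)]
      have hxc : dist (γ₁ s₀) (γ₂ t) = t - t₀ := by
        rw [hxx, hd2, habs]
      have hac : dist (γ₁ (s₀ - 1)) (γ₂ t) = 1 + (t - t₀) := by
        refine le_antisymm ?_ ?_
        · calc dist (γ₁ (s₀ - 1)) (γ₂ t) ≤ dist (γ₁ (s₀ - 1)) (γ₁ s₀) + dist (γ₁ s₀) (γ₂ t) :=
            dist_triangle _ _ _
          _ = 1 + (t - t₀) := by rw [hax, hxc]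
        · have h := hflip (γ₂ t) (γ₁ (s₀ - 1))
          have e1 := htrans₂ t₀ ht₀ t ht
          have e2 := htrans₁ (s₀ - 1) s₀
          rw [hxx] at e2
          rw [dist_comm] at h
          have : s₀ - (s₀ - 1) = 1 := by ring
          linarith
      have := hnb (γ₁ (s₀ - 1)) (γ₁ s₀) (γ₁ (s₀ + (t - t₀))) (γ₂ t)
        (by rw [hab, hax, hxb]) (by rw [hac, hax, hxc]) (by rw [hxb, hxc])
        (by rw [hax]; norm_num)
      exact this.symm
    · have habs : |t - t₀| = t₀ - t := by
        rw [abs_of_nonpos (by linarith)]; ring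
      have hax : dist (γ₁ (s₀ + 1)) (γ₁ s₀) = 1 := by
        rw [hgeo₁, show s₀ + 1 - s₀ = (1 : ℝ) by ring]; norm_num
      have hxb : dist (γ₁ s₀) (γ₁ (s₀ + (t - t₀))) = t₀ - t := by
        rw [hgeo₁, show s₀ - (s₀ + (t - t₀)) = t₀ - t by ring,
          abs_of_nonneg (by linarith)]
      have hab : dist (γ₁ (s₀ + 1)) (γ₁ (s₀ + (t - t₀))) = 1 + (t₀ - t) := by
        rw [hgeo₁, show s₀ + 1 - (s₀ + (t - t₀)) = 1 + (t₀ - t) by ring,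
          abs_of_nonneg (by linarith)]
      have hxc : dist (γ₁ s₀) (γ₂ t) = t₀ - t := by
        rw [hxx, hd2, habs]
      have hac : dist (γ₁ (s₀ + 1)) (γ₂ t) = 1 + (t₀ - t) := by
        refine le_antisymm ?_ ?_
        · calc dist (γ₁ (s₀ + 1)) (γ₂ t) ≤ dist (γ₁ (s₀ + 1)) (γ₁ s₀) + dist (γ₁ s₀) (γ₂ t) :=
            dist_triangle _ _ _
          _ = 1 + (t₀ - t) := by rw [hax, hxc]
        · have h := hflip (γ₁ (s₀ + 1)) (γ₂ t)
          have e1 := htrans₂ t ht t₀ ht₀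
          have e2 := htrans₁ s₀ (s₀ + 1)
          rw [hxx] at e2
          have : s₀ + 1 - s₀ = 1 := by ring
          linarith
      have := hnb (γ₁ (s₀ + 1)) (γ₁ s₀) (γ₁ (s₀ + (t - t₀))) (γ₂ t)
        (by rw [hab, hax, hxb]) (by rw [hac, hax, hxc]) (by rw [hxb, hxc])
        (by rw [hax]; norm_num)
      exact this.symm
  constructor
  · rintro _ ⟨t, ht, rfl⟩
    exact ⟨s₀ + (t - t₀), (key t ht).symm⟩
  · intro hI'
    apply Set.Subset.antisymm
    · rintro _ ⟨t, rfl⟩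
      exact ⟨s₀ + (t - t₀), (key t (by rw [hI']; trivial)).symm⟩
    · rintro _ ⟨s, rfl⟩
      refine ⟨s - s₀ + t₀, ?_⟩
      rw [key _ (by rw [hI']; trivial)]
      congr 1; ring
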